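/- For every word v over A and every integer n ≥ |v|: Σ_{u ∈ A^n} binom_q(u,v) = (#A)^{n−|v|}·gauss(n, |v|), where the sum ranges over all words u of length n over A and #A denotes the cardinality of the alphabet A (the factor (#A)^{n−|v|} is a constant polynomial). -/
import Mathlib


noncomputable def qbinAux {A : Type*} [DecidableEq A] : List A → List A → Polynomial ℕ
  | _, [] => 1
  | [], _ :: _ => 0
  | a :: u, b :: v =>
      Polynomial.X ^ (v.length + 1) * qbinAux u (b :: v) +
        (if a = b then qbinAux u v else 0)

/-- The `q`-binomial coefficient `binom_q(u,v)` of two words. -/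
noncomputable def qbin {A : Type*} [DecidableEq A] (u v : List A) : Polynomial ℕ :=
  qbinAux u.reverse v.reverse

/-- The Gaussian binomial coefficient `gauss(m,n) ∈ ℕ[q]`. -/
noncomputable def gauss : ℕ → ℕ → Polynomial ℕ
  | _, 0 => 1
  | 0, _ + 1 => 0
  | m + 1, n + 1 => Polynomial.X ^ (n + 1) * gauss m (n + 1) + gauss m n

lemma qbinAux_nil_right {A : Type*} [DecidableEq A] (u : List A) : qbinAux u [] = 1 := by
  cases u <;> rfl

lemma gauss_eq_zero : ∀ {n k : ℕ}, n < k → gauss n k = 0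
  | 0, _ + 1, _ => rfl
  | n + 1, k + 1, h => by
      show Polynomial.X ^ (k + 1) * gauss n (k + 1) + gauss n k = 0
      rw [gauss_eq_zero (by omega), gauss_eq_zero (by omega)]
      ring

lemma key (A : Type*) [Fintype A] [DecidableEq A] :
    ∀ (n : ℕ) (r : List A), ∑ u : Fin n → A, qbinAux (List.ofFn u) r =
      (Fintype.card A : Polynomial ℕ) ^ (n - r.length) * gauss n r.length := by
  intro n
  induction n with
  | zero =>
    intro r
    cases r with
    | nil => simp [qbinAux_nil_right, gauss]
    | cons b t =>
      have h0 : ∀ u : Fin 0 → A, qbinAux (List.ofFn u) (b :: t) = 0 := by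
        intro u; simp only [List.ofFn_zero]; rfl
      simp only [h0, Finset.sum_const, smul_zero, List.length_cons,
        gauss_eq_zero (Nat.succ_pos t.length), mul_zero]
  | succ n ih =>
    intro r
    have hsum : ∑ u : Fin (n+1) → A, qbinAux (List.ofFn u) r =
        ∑ a : A, ∑ w : Fin n → A, qbinAux (a :: List.ofFn w) r := by
      rw [← (Fin.consEquiv (fun _ : Fin (n+1) => A)).sum_comp
        (fun u => qbinAux (List.ofFn u) r), Fintype.sum_prod_type]
      congr 1; ext a; congr 1; ext w
      congr 1
      simp [List.ofFn_succ, Fin.consEquiv]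
    cases r with
    | nil =>
      simp only [qbinAux_nil_right, Finset.sum_const, Finset.card_univ, nsmul_eq_mul,
        mul_one, List.length_nil, Nat.sub_zero, Fintype.card_fun, Fintype.card_fin,
        show gauss (n+1) 0 = 1 from rfl]
      push_cast
      ring
    | cons b t =>
      have inner : ∀ a : A, ∑ w : Fin n → A, qbinAux (a :: List.ofFn w) (b :: t) =
          Polynomial.X ^ (t.length + 1) *
            (∑ w : Fin n → A, qbinAux (List.ofFn w) (b :: t)) +
          (if a = b then ∑ w : Fin n → A, qbinAux (List.ofFn w) t else 0) := by
        intro a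
        have hq : ∀ w : Fin n → A, qbinAux (a :: List.ofFn w) (b :: t) =
            Polynomial.X ^ (t.length + 1) * qbinAux (List.ofFn w) (b :: t) +
              (if a = b then qbinAux (List.ofFn w) t else 0) := fun w => rfl
        simp only [hq, Finset.sum_add_distrib, ← Finset.mul_sum]
        congr 1
        split_ifs <;> simp
      rw [hsum]
      simp only [inner, Finset.sum_add_distrib, Finset.sum_const, Finset.card_univ,
        nsmul_eq_mul, Finset.sum_ite_eq' Finset.univ b, Finset.mem_univ, if_true]
      rw [ih (b :: t), ih t]
      simp only [List.length_cons, Nat.succ_sub_succ]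
      rw [show gauss (n+1) (t.length + 1) =
        Polynomial.X ^ (t.length + 1) * gauss n (t.length + 1) + gauss n t.length from rfl]
      rcases le_or_gt (t.length + 1) n with hk | hk
      · have hc : (Fintype.card A : Polynomial ℕ) ^ (n - t.length) =
            (Fintype.card A : Polynomial ℕ) * (Fintype.card A : Polynomial ℕ) ^ (n - (t.length + 1)) := by
          rw [← pow_succ']; congr 1; omega
        rw [hc]; ring
      · rw [gauss_eq_zero hk]; ring

lemma ofFn_reverse {A : Type*} {n : ℕ} (u : Fin n → A) :
    (List.ofFn u).reverse = List.ofFn (fun i => u i.rev) := by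
  apply List.ext_getElem
  · simp
  · intro i h1 h2
    simp only [List.getElem_reverse, List.getElem_ofFn, List.length_ofFn,
      List.length_reverse] at *
    congr 1
    ext
    simp [Fin.rev]
    omega

/-- `Σ_{u ∈ A^n} binom_q(u,v) = (#A)^{n-|v|}·gauss(n,|v|)` for `n ≥ |v|`,
words of length `n` being parametrized by functions `Fin n → A`. -/
theorem qbin_sum_over_superwords (A : Type*) [Fintype A] [DecidableEq A]
    (v : List A) (n : ℕ) (h : v.length ≤ n) :
    ∑ u : Fin n → A, qbin (List.ofFn u) v =
      (Fintype.card A : Polynomial ℕ) ^ (n - v.length) * gauss n v.length := by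
  have hb : Function.Bijective (fun (u : Fin n → A) (i : Fin n) => u i.rev) := by
    apply Function.Involutive.bijective
    intro u; funext i; simp [Fin.rev_rev]
  have := (hb.sum_comp (fun u : Fin n → A => qbin (List.ofFn u) v)).symm
  rw [this]
  have heach : ∀ u : Fin n → A,
      qbin (List.ofFn (fun i : Fin n => u i.rev)) v = qbinAux (List.ofFn u) v.reverse := by
    intro u
    unfold qbin
    congr 1
    rw [ofFn_reverse]
    congr 1
    funext i
    rw [Fin.rev_rev]
  simp only [heach]
  rw [key A n v.reverse, List.length_reverse]
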